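/- Let ρ_A be a density operator on ℂ^d, ε ∈ (0,1), γ = H̄_s^{1−√(1−ε)}(A)_ρ, and Q = {ρ_A ≥ 2^{−γ}𝟙} the projector onto the eigenspace of ρ_A with eigenvalues at least 2^{−γ}. Then Tr[Q] ≤ 2^γ and Tr[Qρ_A] ≥ √(1−ε), so the compression map ρ ↦ QρQ + Tr[ρ(𝟙−Q)]|φ⟩⟨φ| (for a fixed pure state |φ⟩ in the range of Q) followed by the embedding decompressor achieves entanglement fidelity squared at least 1−ε on any purification ρ_AR. -/

import Mathlib

set_option linter.unusedSectionVars false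


open Matrix Finset
open scoped ComplexOrder Kronecker

/-- Outer product `|v⟩⟨v|`. -/
noncomputable def outer {n : Type*} (v : n → ℂ) : Matrix n n ℂ :=
  Matrix.of fun i j => v i * star (v j)

/-- Partial trace over the first (A) factor. -/
noncomputable def ptraceA {dA dR : Type*} [Fintype dA]
    (σ : Matrix (dA × dR) (dA × dR) ℂ) : Matrix dR dR ℂ :=
  Matrix.of fun r r' => ∑ a, σ (a, r) (a, r')

/-- Partial trace over the second (R) factor. -/
noncomputable def ptraceR {dA dR : Type*} [Fintype dR]
    (σ : Matrix (dA × dR) (dA × dR) ℂ) : Matrix dA dA ℂ :=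
  Matrix.of fun a a' => ∑ r, σ (a, r) (a', r)

/-- Spectral projector of a Hermitian matrix onto eigenspaces whose eigenvalue
satisfies the predicate `f` (`f x = true` selected). -/
noncomputable def specProj {d : ℕ} {ρ : Matrix (Fin d) (Fin d) ℂ}
    (hρ : ρ.IsHermitian) (f : ℝ → Bool) : Matrix (Fin d) (Fin d) ℂ :=
  (hρ.eigenvectorUnitary : Matrix (Fin d) (Fin d) ℂ) *
    Matrix.diagonal (fun i => if f (hρ.eigenvalues i) then (1 : ℂ) else 0) *
    star (hρ.eigenvectorUnitary : Matrix (Fin d) (Fin d) ℂ)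

namespace CompressionAux

variable {d : ℕ} {ρ : Matrix (Fin d) (Fin d) ℂ}

/-- conjugation by eigenvector unitary -/
noncomputable def cdiag (hρ : ρ.IsHermitian) (g : Fin d → ℂ) : Matrix (Fin d) (Fin d) ℂ :=
  (hρ.eigenvectorUnitary : Matrix (Fin d) (Fin d) ℂ) * Matrix.diagonal g *
    star (hρ.eigenvectorUnitary : Matrix (Fin d) (Fin d) ℂ)

lemma cdiag_mul (hρ : ρ.IsHermitian) (g h : Fin d → ℂ) :
    cdiag hρ g * cdiag hρ h = cdiag hρ (g * h) := by
  unfold cdiag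
  set U := (hρ.eigenvectorUnitary : Matrix (Fin d) (Fin d) ℂ)
  have h1 : star U * (U * (diagonal h * star U)) = diagonal h * star U := by
    rw [← Matrix.mul_assoc, (Matrix.mem_unitaryGroup_iff').mp hρ.eigenvectorUnitary.2,
      Matrix.one_mul]
  simp only [Matrix.mul_assoc, h1]
  rw [← Matrix.mul_assoc (diagonal g), diagonal_mul_diagonal]
  rfl

lemma trace_cdiag (hρ : ρ.IsHermitian) (g : Fin d → ℂ) :
    (cdiag hρ g).trace = ∑ i, g i := by
  unfold cdiag
  rw [trace_mul_cycle, (Matrix.mem_unitaryGroup_iff').mp hρ.eigenvectorUnitary.2,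
    Matrix.one_mul, trace_diagonal]

lemma cdiag_sub (hρ : ρ.IsHermitian) (g h : Fin d → ℂ) :
    cdiag hρ g - cdiag hρ h = cdiag hρ (g - h) := by
  unfold cdiag
  have hd : Matrix.diagonal (g - h) = diagonal g - diagonal h := by
    rw [show g - h = fun i => g i - h i from rfl, diagonal_sub]
  rw [hd, Matrix.mul_sub, Matrix.sub_mul]

lemma rho_eq_cdiag (hρ : ρ.IsHermitian) :
    ρ = cdiag hρ (fun i => (hρ.eigenvalues i : ℂ)) := by
  have := hρ.spectral_theorem
  convert this using 2
  rw [Unitary.conjStarAlgAut_apply]; rfl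

lemma one_eq_cdiag (hρ : ρ.IsHermitian) :
    (1 : Matrix (Fin d) (Fin d) ℂ) = cdiag hρ 1 := by
  unfold cdiag
  rw [show Matrix.diagonal (1 : Fin d → ℂ) = (1 : Matrix (Fin d) (Fin d) ℂ) from diagonal_one,
    Matrix.mul_one, (Matrix.mem_unitaryGroup_iff).mp hρ.eigenvectorUnitary.2]

lemma smul_one_eq_cdiag (hρ : ρ.IsHermitian) (c : ℂ) :
    c • (1 : Matrix (Fin d) (Fin d) ℂ) = cdiag hρ (fun _ => c) := by
  unfold cdiag
  rw [Matrix.mul_assoc, ← Matrix.smul_eq_diagonal_mul, Matrix.mul_smul,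
    (Matrix.mem_unitaryGroup_iff).mp hρ.eigenvectorUnitary.2]

lemma specProj_eq_cdiag (hρ : ρ.IsHermitian) (f : ℝ → Bool) :
    specProj hρ f = cdiag hρ (fun i => if f (hρ.eigenvalues i) then (1 : ℂ) else 0) := rfl


lemma sub_smul_eq_cdiag (hρ : ρ.IsHermitian) (c : ℝ) :
    ρ - (c : ℂ) • (1 : Matrix (Fin d) (Fin d) ℂ) =
      cdiag hρ (fun i => (hρ.eigenvalues i : ℂ) - c) := by
  calc ρ - (c : ℂ) • (1 : Matrix (Fin d) (Fin d) ℂ)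
      = cdiag hρ (fun i => (hρ.eigenvalues i : ℂ)) - cdiag hρ (fun _ => (c : ℂ)) := by
        rw [← rho_eq_cdiag hρ, ← smul_one_eq_cdiag hρ]
    _ = cdiag hρ ((fun i => (hρ.eigenvalues i : ℂ)) - fun _ => (c : ℂ)) := cdiag_sub hρ _ _
    _ = cdiag hρ (fun i => (hρ.eigenvalues i : ℂ) - c) := rfl

lemma trace_specProj_mul_sub (hρ : ρ.IsHermitian) (c : ℝ) (f : ℝ → Bool) :
    ((specProj hρ f * (ρ - (c : ℂ) • (1 : Matrix (Fin d) (Fin d) ℂ))).trace) =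
      ((∑ i, if f (hρ.eigenvalues i) then hρ.eigenvalues i - c else 0 : ℝ) : ℂ) := by
  rw [specProj_eq_cdiag, sub_smul_eq_cdiag hρ, cdiag_mul, trace_cdiag]
  rw [Complex.ofReal_sum]
  refine Finset.sum_congr rfl fun i _ => ?_
  by_cases h : f (hρ.eigenvalues i) <;> simp [h]

lemma trace_sub_mul_specProj (hρ : ρ.IsHermitian) (c : ℝ) (f : ℝ → Bool) :
    (((ρ - (c : ℂ) • (1 : Matrix (Fin d) (Fin d) ℂ)) * specProj hρ f).trace) =
      ((∑ i, if f (hρ.eigenvalues i) then hρ.eigenvalues i - c else 0 : ℝ) : ℂ) := by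
  rw [Matrix.trace_mul_comm, trace_specProj_mul_sub]

lemma trace_specProj_mul (hρ : ρ.IsHermitian) (f : ℝ → Bool) :
    ((specProj hρ f * ρ).trace) =
      ((∑ i, if f (hρ.eigenvalues i) then hρ.eigenvalues i else 0 : ℝ) : ℂ) := by
  have := trace_specProj_mul_sub hρ 0 f
  simpa using this

lemma trace_specProj (hρ : ρ.IsHermitian) (f : ℝ → Bool) :
    ((specProj hρ f).trace) =
      ((∑ i, if f (hρ.eigenvalues i) then (1:ℝ) else 0 : ℝ) : ℂ) := by
  rw [specProj_eq_cdiag, trace_cdiag, Complex.ofReal_sum]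
  refine Finset.sum_congr rfl fun i _ => ?_
  by_cases h : f (hρ.eigenvalues i) <;> simp [h]

lemma specProj_mul_self (hρ : ρ.IsHermitian) (f : ℝ → Bool) :
    specProj hρ f * specProj hρ f = specProj hρ f := by
  rw [specProj_eq_cdiag, cdiag_mul]
  have : ((fun i => if f (hρ.eigenvalues i) then (1:ℂ) else 0) *
      fun i => if f (hρ.eigenvalues i) then (1:ℂ) else 0) =
      fun i => if f (hρ.eigenvalues i) then (1:ℂ) else 0 := by
    funext i
    by_cases h : f (hρ.eigenvalues i) <;> simp [h]
  rw [this]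

lemma specProj_isHermitian (hρ : ρ.IsHermitian) (f : ℝ → Bool) :
    (specProj hρ f).IsHermitian := by
  have hD : (Matrix.diagonal fun i => if f (hρ.eigenvalues i) then (1:ℂ) else 0).IsHermitian := by
    apply isHermitian_diagonal_of_self_adjoint
    funext i
    by_cases h : f (hρ.eigenvalues i) <;> simp [h, Pi.star_def]
  have := Matrix.isHermitian_mul_mul_conjTranspose
    (hρ.eigenvectorUnitary : Matrix (Fin d) (Fin d) ℂ) hD
  unfold specProj
  rw [Matrix.star_eq_conjTranspose]
  exact this


section outerlemmas

variable {n : Type*} [Fintype n]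

lemma trace_mul_outer (B : Matrix n n ℂ) (v : n → ℂ) :
    (B * outer v).trace = star v ⬝ᵥ B *ᵥ v := by
  simp only [Matrix.trace, Matrix.diag, Matrix.mul_apply, outer, Matrix.of_apply,
    dotProduct, mulVec, Pi.star_apply, Finset.mul_sum]
  refine Finset.sum_congr rfl fun i _ => Finset.sum_congr rfl fun j _ => ?_
  ring

lemma outer_mul_mul_outer (B : Matrix n n ℂ) (v : n → ℂ) :
    outer v * B * outer v = (star v ⬝ᵥ B *ᵥ v) • outer v := by
  ext i j
  simp only [Matrix.mul_apply, outer, Matrix.of_apply, Matrix.smul_apply,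
    dotProduct, mulVec, Pi.star_apply, smul_eq_mul, Finset.sum_mul, Finset.mul_sum]
  rw [Finset.sum_comm]
  refine Finset.sum_congr rfl fun k _ => Finset.sum_congr rfl fun l _ => ?_
  ring

lemma outer_mulVec (A : Matrix n n ℂ) (v : n → ℂ) :
    outer (A *ᵥ v) = A * outer v * Aᴴ := by
  ext i j
  simp only [outer, Matrix.of_apply, mulVec, Matrix.mul_apply, Matrix.conjTranspose_apply,
    dotProduct, Finset.sum_mul, Finset.mul_sum, star_sum, star_mul']
  refine Finset.sum_congr rfl fun k _ => Finset.sum_congr rfl fun l _ => ?_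
  ring

end outerlemmas

section kronlemmas

variable {dA dR : Type*} [Fintype dA] [Fintype dR] [DecidableEq dA] [DecidableEq dR]

lemma kron_conjTranspose (A : Matrix dA dA ℂ) (B : Matrix dR dR ℂ) :
    (A ⊗ₖ B)ᴴ = Aᴴ ⊗ₖ Bᴴ := by
  ext ⟨i, j⟩ ⟨k, l⟩
  simp [Matrix.conjTranspose_apply, Matrix.kroneckerMap_apply, star_mul']

lemma trace_kron_one_mul (B : Matrix dA dA ℂ) (σ : Matrix (dA × dR) (dA × dR) ℂ) :
    ((B ⊗ₖ (1 : Matrix dR dR ℂ)) * σ).trace = (B * ptraceR σ).trace := by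
  simp only [Matrix.trace, Matrix.diag, Matrix.mul_apply, Matrix.kroneckerMap_apply,
    ptraceR, Matrix.of_apply, Matrix.one_apply, Fintype.sum_prod_type, mul_ite, mul_one,
    mul_zero, ite_mul, zero_mul, Finset.mul_sum, Finset.sum_ite_eq, Finset.mem_univ,
    if_true]
  exact Finset.sum_congr rfl fun a _ => Finset.sum_comm

lemma ptraceA_kron_one_mul_comm (P : Matrix dA dA ℂ) (σ : Matrix (dA × dR) (dA × dR) ℂ) :
    ptraceA ((P ⊗ₖ (1 : Matrix dR dR ℂ)) * σ) = ptraceA (σ * (P ⊗ₖ (1 : Matrix dR dR ℂ))) := by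
  ext r r'
  simp only [ptraceA, Matrix.of_apply, Matrix.mul_apply, Matrix.kroneckerMap_apply,
    Matrix.one_apply, Fintype.sum_prod_type, mul_ite, mul_one, mul_zero, ite_mul,
    zero_mul, one_mul, Finset.sum_ite_eq, Finset.sum_ite_eq', Finset.mem_univ, if_true]
  rw [Finset.sum_comm]
  refine Finset.sum_congr rfl fun a _ => Finset.sum_congr rfl fun b _ => mul_comm _ _

lemma ptraceA_outer_posSemidef (w : dA × dR → ℂ) :
    (ptraceA (outer w)).PosSemidef := by
  have : ptraceA (outer w) =
      (Matrix.of fun (a : dA) (r : dR) => star (w (a, r)))ᴴ *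
      (Matrix.of fun (a : dA) (r : dR) => star (w (a, r))) := by
    ext r r'
    simp [ptraceA, outer, Matrix.mul_apply, Matrix.conjTranspose_apply]
  rw [this]
  exact Matrix.posSemidef_conjTranspose_mul_self _

lemma outer_kron_posSemidef (φ : dA → ℂ) {M : Matrix dR dR ℂ} (hM : M.PosSemidef) :
    (outer φ ⊗ₖ M).PosSemidef := by
  obtain ⟨W, hW⟩ : ∃ W : Matrix dR dR ℂ, M = Wᴴ * W := by
    open scoped MatrixOrder in
    obtain ⟨B, hB⟩ := CStarAlgebra.nonneg_iff_eq_star_mul_self.mp hM.nonneg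
    exact ⟨B, hB⟩
  have hφ : outer φ = Matrix.replicateCol Unit φ * (Matrix.replicateCol Unit φ)ᴴ := by
    ext i j
    simp [outer, Matrix.mul_apply, Matrix.replicateCol, Matrix.conjTranspose_apply]
  rw [hφ, hW, Matrix.mul_kronecker_mul]
  have : (Matrix.replicateCol Unit φ ⊗ₖ Wᴴ)ᴴ = (Matrix.replicateCol Unit φ)ᴴ ⊗ₖ W := by
    ext ⟨i, j⟩ ⟨k, l⟩
    simp [Matrix.conjTranspose_apply, Matrix.kroneckerMap_apply, star_mul']
  rw [← this]
  exact Matrix.posSemidef_self_mul_conjTranspose _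

end kronlemmas

end CompressionAux

/-- let `γ = H̄_s^{1−√(1−ε)}(A)_ρ` and `Q = {ρ ≥ 2^{−γ}𝟙}`. Then
`Tr Q ≤ 2^γ`, `Tr[Q(ρ − 2^{−γ}𝟙)] ≥ 1 − (1 − √(1−ε))`, hence `Tr[Qρ] ≥ √(1−ε)`, and
for every purification `ρ_AR` of `ρ` the compression map
`σ ↦ QσQ + Tr[σ(𝟙−Q)]|φ⟩⟨φ|` (with `|φ⟩` a unit vector in the range of `Q`) followed
by the embedding decompressor achieves entanglement fidelity squared
`F² = Tr[ρ_AR · out] ≥ (Tr[Qρ])² ≥ 1 − ε`. -/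
theorem compression_achievability {d : ℕ} (ρ : Matrix (Fin d) (Fin d) ℂ)
    (hρ : ρ.PosSemidef) (hρ1 : ρ.trace = 1) (ε : ℝ) (hε : ε ∈ Set.Ioo (0 : ℝ) 1)
    (γ : ℝ)
    (hγ : γ = -sSup {γ' : ℝ |
      1 - (1 - Real.sqrt (1 - ε)) ≤
        (((ρ - (((2 : ℝ) ^ γ' : ℝ) : ℂ) • (1 : Matrix (Fin d) (Fin d) ℂ)) *
          specProj hρ.1 (fun x => (2 : ℝ) ^ γ' < x)).trace).re})
    (Q : Matrix (Fin d) (Fin d) ℂ)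
    (hQ : Q = specProj hρ.1 (fun x => (2 : ℝ) ^ (-γ) ≤ x)) :
    (Q.trace).re ≤ (2 : ℝ) ^ γ ∧
    1 - (1 - Real.sqrt (1 - ε)) ≤
      ((Q * (ρ - (((2 : ℝ) ^ (-γ) : ℝ) : ℂ) • (1 : Matrix (Fin d) (Fin d) ℂ))).trace).re ∧
    Real.sqrt (1 - ε) ≤ ((Q * ρ).trace).re ∧
    (∀ (dR : ℕ) (v : Fin d × Fin dR → ℂ), ptraceR (outer v) = ρ →
      ∀ φ : Fin d → ℂ, Q *ᵥ φ = φ → star φ ⬝ᵥ φ = 1 →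
        (((Q * ρ).trace).re) ^ 2 ≤
          ((outer v *
            ((Q ⊗ₖ (1 : Matrix (Fin dR) (Fin dR) ℂ)) * outer v *
              (Q ⊗ₖ (1 : Matrix (Fin dR) (Fin dR) ℂ)) +
             (outer φ) ⊗ₖ ptraceA
               ((((1 : Matrix (Fin d) (Fin d) ℂ) - Q) ⊗ₖ
                 (1 : Matrix (Fin dR) (Fin dR) ℂ)) * outer v))).trace).re ∧
        1 - ε ≤ (((Q * ρ).trace).re) ^ 2) := by
  obtain ⟨hε0, hε1⟩ := hε
  have hnn : ∀ i, 0 ≤ hρ.1.eigenvalues i := fun i => hρ.eigenvalues_nonneg i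
  have hsum : ∑ i, hρ.1.eigenvalues i = 1 := by
    have h1 : ρ.trace = ((∑ i, hρ.1.eigenvalues i : ℝ) : ℂ) := by
      have h2 := congrArg Matrix.trace (CompressionAux.rho_eq_cdiag hρ.1)
      rw [CompressionAux.trace_cdiag] at h2
      rw [h2, Complex.ofReal_sum]
    rw [hρ1] at h1
    exact_mod_cast h1.symm
  have hle1 : ∀ i, hρ.1.eigenvalues i ≤ 1 := by
    intro i
    rw [← hsum]
    exact Finset.single_le_sum (fun j _ => hnn j) (Finset.mem_univ i)
  have hδ0 : 0 < Real.sqrt (1 - ε) := Real.sqrt_pos.mpr (by linarith)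
  have hδsq : Real.sqrt (1 - ε) ^ 2 = 1 - ε := Real.sq_sqrt (by linarith)
  have hδ1 : Real.sqrt (1 - ε) < 1 := by nlinarith
  -- the eigenvalue tail function
  have hgc : Continuous (fun t : ℝ => ∑ i, max (hρ.1.eigenvalues i - (2:ℝ) ^ t) 0) := by
    apply continuous_finset_sum
    intro i _
    have h2 : Continuous fun t : ℝ => (2:ℝ) ^ t := by
      have h3 : (fun t : ℝ => (2:ℝ) ^ t) = fun t => Real.exp (Real.log 2 * t) := by
        funext t; rw [Real.rpow_def_of_pos (by norm_num)]
      rw [h3]; exact Real.continuous_exp.comp (continuous_const.mul continuous_id)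
    exact (continuous_const.sub h2).max continuous_const
  have hSeq : {γ' : ℝ |
      1 - (1 - Real.sqrt (1 - ε)) ≤
        (((ρ - (((2 : ℝ) ^ γ' : ℝ) : ℂ) • (1 : Matrix (Fin d) (Fin d) ℂ)) *
          specProj hρ.1 (fun x => (2 : ℝ) ^ γ' < x)).trace).re} =
      (fun t : ℝ => ∑ i, max (hρ.1.eigenvalues i - (2:ℝ) ^ t) 0) ⁻¹' Set.Ici (Real.sqrt (1 - ε)) := by
    ext t
    simp only [Set.mem_setOf_eq, Set.mem_preimage, Set.mem_Ici]
    rw [CompressionAux.trace_sub_mul_specProj hρ.1 ((2:ℝ) ^ t) _, Complex.ofReal_re,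
      sub_sub_cancel]
    have hEq : (∑ i, if (fun x => decide ((2:ℝ) ^ t < x)) (hρ.1.eigenvalues i) = true
          then hρ.1.eigenvalues i - (2:ℝ) ^ t else 0) =
        ∑ i, max (hρ.1.eigenvalues i - (2:ℝ) ^ t) 0 := by
      refine Finset.sum_congr rfl fun i _ => ?_
      by_cases hi : (2:ℝ) ^ t < hρ.1.eigenvalues i
      · rw [if_pos (by simpa using hi), max_eq_left (by linarith)]
      · rw [if_neg (by simpa using hi), max_eq_right (by push_neg at hi; linarith)]
    rw [hEq]
  have hd0 : 0 < d := by
    by_contra h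
    push_neg at h
    interval_cases d
    simp at hsum
  have hdR : (0:ℝ) < d := by exact_mod_cast hd0
  have hne : ((fun t : ℝ => ∑ i, max (hρ.1.eigenvalues i - (2:ℝ) ^ t) 0) ⁻¹'
      Set.Ici (Real.sqrt (1 - ε))).Nonempty := by
    refine ⟨Real.logb 2 ((1 - Real.sqrt (1 - ε))/d), ?_⟩
    simp only [Set.mem_preimage, Set.mem_Ici]
    have h2t : (2:ℝ) ^ (Real.logb 2 ((1 - Real.sqrt (1 - ε))/d)) =
        (1 - Real.sqrt (1 - ε))/d :=
      Real.rpow_logb (by norm_num) (by norm_num) (div_pos (by linarith) hdR)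
    rw [h2t]
    calc Real.sqrt (1 - ε) = ∑ i : Fin d, (hρ.1.eigenvalues i - (1 - Real.sqrt (1 - ε))/d) := by
          rw [Finset.sum_sub_distrib, hsum, Finset.sum_const, Finset.card_univ,
            Fintype.card_fin, nsmul_eq_mul]
          field_simp
          ring
      _ ≤ ∑ i : Fin d, max (hρ.1.eigenvalues i - (1 - Real.sqrt (1 - ε))/d) 0 :=
          Finset.sum_le_sum fun i _ => le_max_left _ _
  have hbdd : BddAbove ((fun t : ℝ => ∑ i, max (hρ.1.eigenvalues i - (2:ℝ) ^ t) 0) ⁻¹'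
      Set.Ici (Real.sqrt (1 - ε))) := by
    refine ⟨0, fun t ht => ?_⟩
    simp only [Set.mem_preimage, Set.mem_Ici] at ht
    by_contra h
    push_neg at h
    have h2 : (1:ℝ) < (2:ℝ) ^ t := by
      have := (Real.rpow_lt_rpow_left_iff (by norm_num : (1:ℝ) < 2)).mpr h
      rwa [Real.rpow_zero] at this
    have hz : (∑ i, max (hρ.1.eigenvalues i - (2:ℝ) ^ t) 0) = 0 :=
      Finset.sum_eq_zero fun i _ => max_eq_right (by have := hle1 i; linarith)
    rw [hz] at ht
    linarith
  have hmem := ((isClosed_Ici.preimage hgc).csSup_mem hne hbdd)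
  have hSs : -γ = sSup ((fun t : ℝ => ∑ i, max (hρ.1.eigenvalues i - (2:ℝ) ^ t) 0) ⁻¹'
      Set.Ici (Real.sqrt (1 - ε))) := by
    rw [hγ, hSeq, neg_neg]
  rw [← hSs] at hmem
  simp only [Set.mem_preimage, Set.mem_Ici] at hmem
  -- hmem : √(1-ε) ≤ ∑ i, max (λ i - 2^(-γ)) 0
  have hP2sum : Real.sqrt (1 - ε) ≤
      ∑ i, if (2:ℝ) ^ (-γ) ≤ hρ.1.eigenvalues i then hρ.1.eigenvalues i - (2:ℝ) ^ (-γ) else 0 := by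
    refine le_trans hmem (le_of_eq (Finset.sum_congr rfl fun i _ => ?_))
    by_cases hi : (2:ℝ) ^ (-γ) ≤ hρ.1.eigenvalues i
    · rw [max_eq_left (by linarith), if_pos hi]
    · rw [max_eq_right (by push_neg at hi; linarith), if_neg hi]
  have hc0 : (0:ℝ) ≤ (2:ℝ) ^ (-γ) := Real.rpow_nonneg (by norm_num) _
  -- Part 2
  have part2 : 1 - (1 - Real.sqrt (1 - ε)) ≤
      ((Q * (ρ - (((2 : ℝ) ^ (-γ) : ℝ) : ℂ) • (1 : Matrix (Fin d) (Fin d) ℂ))).trace).re := by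
    rw [hQ, CompressionAux.trace_specProj_mul_sub hρ.1 ((2:ℝ) ^ (-γ)) _, Complex.ofReal_re,
      sub_sub_cancel]
    refine le_trans hP2sum (le_of_eq (Finset.sum_congr rfl fun i _ => ?_))
    by_cases hi : (2:ℝ) ^ (-γ) ≤ hρ.1.eigenvalues i
    · rw [if_pos hi, if_pos (by simpa using hi)]
    · rw [if_neg hi, if_neg (by simpa using hi)]
  -- Part 1
  have part1 : (Q.trace).re ≤ (2 : ℝ) ^ γ := by
    rw [hQ, CompressionAux.trace_specProj, Complex.ofReal_re]
    have hQtr : (∑ i, if (fun x => decide ((2:ℝ) ^ (-γ) ≤ x)) (hρ.1.eigenvalues i) = true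
          then (1:ℝ) else 0) =
        ∑ i, if (2:ℝ) ^ (-γ) ≤ hρ.1.eigenvalues i then (1:ℝ) else 0 :=
      Finset.sum_congr rfl fun i _ => by simp
    rw [hQtr]
    have key : (2:ℝ) ^ (-γ) * ∑ i, (if (2:ℝ) ^ (-γ) ≤ hρ.1.eigenvalues i then (1:ℝ) else 0) ≤ 1 := by
      rw [Finset.mul_sum]
      calc (∑ i, (2:ℝ) ^ (-γ) * if (2:ℝ) ^ (-γ) ≤ hρ.1.eigenvalues i then (1:ℝ) else 0)
          ≤ ∑ i, hρ.1.eigenvalues i := by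
            refine Finset.sum_le_sum fun i _ => ?_
            by_cases hi : (2:ℝ) ^ (-γ) ≤ hρ.1.eigenvalues i
            · rw [if_pos hi, mul_one]; exact hi
            · rw [if_neg hi, mul_zero]; exact hnn i
        _ = 1 := hsum
    have hn0 : (0:ℝ) ≤ ∑ i, (if (2:ℝ) ^ (-γ) ≤ hρ.1.eigenvalues i then (1:ℝ) else 0) :=
      Finset.sum_nonneg fun i _ => by positivity
    have h1 : (2:ℝ) ^ γ * (2:ℝ) ^ (-γ) = 1 := by
      rw [← Real.rpow_add (by norm_num)]; simp
    have h2γ : (0:ℝ) ≤ (2:ℝ) ^ γ := Real.rpow_nonneg (by norm_num) _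
    nlinarith [mul_le_mul_of_nonneg_left key h2γ]
  -- trace of Q * ρ as a real sum
  have hQρ : (Q * ρ).trace =
      ((∑ i, if (2:ℝ) ^ (-γ) ≤ hρ.1.eigenvalues i then hρ.1.eigenvalues i else 0 : ℝ) : ℂ) := by
    rw [hQ, CompressionAux.trace_specProj_mul hρ.1]
    congr 1
    refine Finset.sum_congr rfl fun i _ => ?_
    by_cases hi : (2:ℝ) ^ (-γ) ≤ hρ.1.eigenvalues i
    · rw [if_pos hi, if_pos (by simpa using hi)]
    · rw [if_neg hi, if_neg (by simpa using hi)]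
  -- Part 3
  have part3 : Real.sqrt (1 - ε) ≤ ((Q * ρ).trace).re := by
    rw [hQρ, Complex.ofReal_re]
    have hsplit : ∀ i, (if (2:ℝ) ^ (-γ) ≤ hρ.1.eigenvalues i then hρ.1.eigenvalues i else 0) =
        (if (2:ℝ) ^ (-γ) ≤ hρ.1.eigenvalues i then hρ.1.eigenvalues i - (2:ℝ) ^ (-γ) else 0) +
        (if (2:ℝ) ^ (-γ) ≤ hρ.1.eigenvalues i then (2:ℝ) ^ (-γ) else 0) := by
      intro i
      by_cases hi : (2:ℝ) ^ (-γ) ≤ hρ.1.eigenvalues i <;> simp [hi]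
    calc Real.sqrt (1 - ε)
        ≤ ∑ i, if (2:ℝ) ^ (-γ) ≤ hρ.1.eigenvalues i then hρ.1.eigenvalues i - (2:ℝ) ^ (-γ) else 0 :=
          hP2sum
      _ ≤ _ := by
          rw [Finset.sum_congr rfl fun i _ => hsplit i, Finset.sum_add_distrib]
          have : (0:ℝ) ≤ ∑ i, if (2:ℝ) ^ (-γ) ≤ hρ.1.eigenvalues i then (2:ℝ) ^ (-γ) else 0 :=
            Finset.sum_nonneg fun i _ => by positivity
          linarith
  refine ⟨part1, part2, part3, ?_⟩
  -- Part 4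
  intro dR v hv φ hφQ hφ1
  have hsq : 1 - ε ≤ (((Q * ρ).trace).re) ^ 2 := by
    have h1 := pow_le_pow_left₀ hδ0.le part3 2
    linarith [hδsq ▸ h1]
  refine ⟨?_, hsq⟩
  have hc : ((Q ⊗ₖ (1 : Matrix (Fin dR) (Fin dR) ℂ)) * outer v).trace = (Q * ρ).trace := by
    rw [CompressionAux.trace_kron_one_mul, hv]
  have hdot : star v ⬝ᵥ (Q ⊗ₖ (1 : Matrix (Fin dR) (Fin dR) ℂ)) *ᵥ v = (Q * ρ).trace := by
    rw [← CompressionAux.trace_mul_outer, hc]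
  have hT1 : (outer v * ((Q ⊗ₖ (1 : Matrix (Fin dR) (Fin dR) ℂ)) * outer v *
      (Q ⊗ₖ (1 : Matrix (Fin dR) (Fin dR) ℂ)))).trace = (Q * ρ).trace * (Q * ρ).trace := by
    have e1 : outer v * ((Q ⊗ₖ (1 : Matrix (Fin dR) (Fin dR) ℂ)) * outer v *
        (Q ⊗ₖ (1 : Matrix (Fin dR) (Fin dR) ℂ))) =
        ((star v ⬝ᵥ (Q ⊗ₖ (1 : Matrix (Fin dR) (Fin dR) ℂ)) *ᵥ v) • outer v) *
          (Q ⊗ₖ (1 : Matrix (Fin dR) (Fin dR) ℂ)) := by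
      rw [← CompressionAux.outer_mul_mul_outer]
      simp only [Matrix.mul_assoc]
    rw [e1, Matrix.smul_mul, Matrix.trace_smul, smul_eq_mul, hdot,
      Matrix.trace_mul_comm (outer v) (Q ⊗ₖ (1 : Matrix (Fin dR) (Fin dR) ℂ)), hc]
  have hPP : ((1 : Matrix (Fin d) (Fin d) ℂ) - Q) * ((1 : Matrix (Fin d) (Fin d) ℂ) - Q) =
      (1 : Matrix (Fin d) (Fin d) ℂ) - Q := by
    rw [hQ, Matrix.mul_sub, Matrix.sub_mul, Matrix.sub_mul, Matrix.one_mul, Matrix.one_mul,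
      Matrix.mul_one, CompressionAux.specProj_mul_self]
    abel
  have hPH : ((1 : Matrix (Fin d) (Fin d) ℂ) - Q)ᴴ = (1 : Matrix (Fin d) (Fin d) ℂ) - Q := by
    rw [Matrix.conjTranspose_sub, Matrix.conjTranspose_one, hQ,
      CompressionAux.specProj_isHermitian hρ.1]
  have hM : ptraceA ((((1 : Matrix (Fin d) (Fin d) ℂ) - Q) ⊗ₖ
        (1 : Matrix (Fin dR) (Fin dR) ℂ)) * outer v) =
      ptraceA (outer (((((1 : Matrix (Fin d) (Fin d) ℂ) - Q) ⊗ₖ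
        (1 : Matrix (Fin dR) (Fin dR) ℂ))) *ᵥ v)) := by
    rw [CompressionAux.outer_mulVec,
      show ((((1 : Matrix (Fin d) (Fin d) ℂ) - Q) ⊗ₖ (1 : Matrix (Fin dR) (Fin dR) ℂ)))ᴴ =
        ((1 : Matrix (Fin d) (Fin d) ℂ) - Q) ⊗ₖ (1 : Matrix (Fin dR) (Fin dR) ℂ) from by
          rw [CompressionAux.kron_conjTranspose, hPH, Matrix.conjTranspose_one],
      ← CompressionAux.ptraceA_kron_one_mul_comm, ← Matrix.mul_assoc,
      ← Matrix.mul_kronecker_mul, hPP, Matrix.one_mul]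
  have hMpsd : (ptraceA ((((1 : Matrix (Fin d) (Fin d) ℂ) - Q) ⊗ₖ
      (1 : Matrix (Fin dR) (Fin dR) ℂ)) * outer v)).PosSemidef := by
    rw [hM]; exact CompressionAux.ptraceA_outer_posSemidef _
  have hNpsd := CompressionAux.outer_kron_posSemidef φ hMpsd
  have hT2 : 0 ≤ ((outer v * ((outer φ) ⊗ₖ ptraceA ((((1 : Matrix (Fin d) (Fin d) ℂ) - Q) ⊗ₖ
      (1 : Matrix (Fin dR) (Fin dR) ℂ)) * outer v))).trace).re := by
    rw [Matrix.trace_mul_comm, CompressionAux.trace_mul_outer]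
    have h0 := hNpsd.dotProduct_mulVec_nonneg v
    simpa using (Complex.le_def.mp h0).1
  rw [Matrix.mul_add, Matrix.trace_add, Complex.add_re]
  have hT1' : ((outer v * ((Q ⊗ₖ (1 : Matrix (Fin dR) (Fin dR) ℂ)) * outer v *
      (Q ⊗ₖ (1 : Matrix (Fin dR) (Fin dR) ℂ)))).trace).re = (((Q * ρ).trace).re) ^ 2 := by
    rw [hT1, hQρ, ← Complex.ofReal_mul, Complex.ofReal_re, Complex.ofReal_re, sq]
  rw [hT1']
  linarith [hT2]
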